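/- Fix τ with 0 < τ ≤ 1/(8d²) and a slack vector ν with ‖ν‖_∞ ≤ 1/(4d). Let Γ be a minimizer of ⟨C,Γ⟩ − (1/η)H(Γ) over 𝕃₂^ν, let Γ*_η be the minimizer of ⟨C,Γ⟩ − (1/η)H(Γ) over 𝕃₂, and let Γ(2) ∈ 𝕃₂ be any marginal vector all of whose entries are at least τ and which satisfies ‖Γ − Γ(2)‖₁ ≤ 2‖ν‖₁ + 2(|E|+n)d²τ. Then Σ_{i∈V} (1/2)‖Γ(2)_i − (Γ*_η)_i‖₁² + Σ_{ij∈E} (1/2)‖Γ(2)_{ij} − (Γ*_η)_{ij}‖₁² ≤ (η‖C‖_∞ + log(1/τ))·(8·d·deg(G)·‖ν‖₁ + 10(|E|+n)d²τ). -/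

import Mathlib

noncomputable section

/-- A marginal vector: a vector `Γ_i ∈ ℝ^d` for every vertex and a matrix
`Γ_{ij} ∈ ℝ^{d×d}` for every edge (components outside `E` are ignored). -/
abbrev MV (V : Type) (d : ℕ) : Type :=
  (V → Fin d → ℝ) × ((V × V) → Fin d → Fin d → ℝ)

/-- `‖Γ‖₁`: the sum of absolute values of all entries of `Γ`. -/
def mvL1 {V : Type} [Fintype V] {d : ℕ} (E : Finset (V × V)) (Γ : MV V d) : ℝ :=
  (∑ i : V, ∑ x : Fin d, |Γ.1 i x|) + ∑ e ∈ E, ∑ x : Fin d, ∑ y : Fin d, |Γ.2 e x y|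

/-- A slack vector: for each edge `ij`, vectors `ν_{ij}` (first component)
and `ν_{ji}` (second component) in `ℝ^d`. -/
abbrev Slk (V : Type) (d : ℕ) : Type :=
  ((V × V) → Fin d → ℝ) × ((V × V) → Fin d → ℝ)

/-- Slack vectors have zero coordinate sums on every edge. -/
def isSlack {V : Type} {d : ℕ} (E : Finset (V × V)) (ν : Slk V d) : Prop :=
  ∀ e ∈ E, (∑ x, ν.1 e x = 0) ∧ (∑ x, ν.2 e x = 0)

/-- `‖ν‖₁`: the sum of absolute values of all entries of the slack vector. -/
def slkL1 {V : Type} {d : ℕ} (E : Finset (V × V)) (ν : Slk V d) : ℝ :=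
  ∑ e ∈ E, ((∑ x, |ν.1 e x|) + ∑ x, |ν.2 e x|)

/-- Membership in the slack polytope `𝕃₂^ν`; the local polytope `𝕃₂` is
`𝕃₂^0`. -/
def memSL2 {V : Type} [Fintype V] {d : ℕ} (E : Finset (V × V)) (ν : Slk V d)
    (Γ : MV V d) : Prop :=
  (∀ i x, 0 ≤ Γ.1 i x) ∧ (∀ i, ∑ x, Γ.1 i x = 1) ∧
  (∀ e ∈ E, ∀ x y, 0 ≤ Γ.2 e x y) ∧
  (∀ e ∈ E, ∀ x, ∑ y, Γ.2 e x y = Γ.1 e.1 x + ν.1 e x) ∧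
  (∀ e ∈ E, ∀ y, ∑ x, Γ.2 e x y = Γ.1 e.2 y + ν.2 e y) ∧
  (∀ e ∈ E, ∑ x, ∑ y, Γ.2 e x y = 1)

/-- Maximum degree of the graph. -/
def degG {V : Type} [Fintype V] [DecidableEq V] (E : Finset (V × V)) : ℕ :=
  Finset.univ.sup fun i : V => (E.filter fun e => e.1 = i ∨ e.2 = i).card

/-- The objective `⟨C, Γ⟩`. -/
def mvInner {V : Type} [Fintype V] {d : ℕ} (E : Finset (V × V))
    (Cv : V → Fin d → ℝ) (Ce : V × V → Fin d → Fin d → ℝ) (Γ : MV V d) : ℝ :=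
  (∑ i : V, ∑ x : Fin d, Cv i x * Γ.1 i x) +
    ∑ e ∈ E, ∑ x : Fin d, ∑ y : Fin d, Ce e x y * Γ.2 e x y

/-- `H(Γ) = Σ_e Γ_e (1 − log Γ_e)` over all entries (with `0 log 0 = 0`). -/
def mvH {V : Type} [Fintype V] {d : ℕ} (E : Finset (V × V)) (Γ : MV V d) : ℝ :=
  (∑ i : V, ∑ x : Fin d, Γ.1 i x * (1 - Real.log (Γ.1 i x))) +
    ∑ e ∈ E, ∑ x : Fin d, ∑ y : Fin d, Γ.2 e x y * (1 - Real.log (Γ.2 e x y))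



open Finset

namespace Stmt16

private lemma k_deriv {x : ℝ} (hx : 0 < x) :
    HasDerivAt (fun x : ℝ => (x+1) * Real.log x - 2*(x-1))
      (Real.log x + (x+1) * x⁻¹ - 2) x := by
  have h1 : HasDerivAt (fun x : ℝ => (x+1) * Real.log x)
      (1 * Real.log x + (x+1) * x⁻¹) x :=
    (((hasDerivAt_id x).add_const 1).mul (Real.hasDerivAt_log hx.ne'))
  have h2 : HasDerivAt (fun x : ℝ => 2*(x-1)) (2*1) x :=
    ((hasDerivAt_id x).sub_const 1).const_mul 2
  exact (h1.sub h2).congr_deriv (by ring)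

private lemma k_mono : MonotoneOn (fun x : ℝ => (x+1) * Real.log x - 2*(x-1)) (Set.Ioi 0) := by
  have hderiv : ∀ x ∈ interior (Set.Ioi (0:ℝ)), 0 ≤
      deriv (fun x : ℝ => (x+1) * Real.log x - 2*(x-1)) x := by
    intro x hx
    rw [interior_Ioi] at hx
    have hx : (0:ℝ) < x := hx
    rw [(k_deriv hx).deriv]
    have h := Real.one_sub_inv_le_log_of_pos hx
    have hxne : x ≠ 0 := hx.ne'
    have : (x+1) * x⁻¹ = 1 + x⁻¹ := by field_simp
    rw [this]; linarith
  have hdiff : DifferentiableOn ℝ (fun x : ℝ => (x+1) * Real.log x - 2*(x-1))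
      (interior (Set.Ioi (0:ℝ))) := by
    rw [interior_Ioi]
    intro x hx
    exact (k_deriv hx).differentiableAt.differentiableWithinAt
  refine monotoneOn_of_deriv_nonneg (convex_Ioi 0) ?_ hdiff hderiv
  · intro x hx
    exact (k_deriv hx).differentiableAt.continuousAt.continuousWithinAt

private lemma k_one : ((1:ℝ)+1) * Real.log 1 - 2*((1:ℝ)-1) = 0 := by simp

private lemma h_deriv {x : ℝ} (hx : 0 < x) :
    HasDerivAt (fun x : ℝ => (2*x+4)*(x*Real.log x - x + 1) - 3*(x-1)^2)
      (4*((x+1) * Real.log x - 2*(x-1))) x := by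
  have h1 : HasDerivAt (fun x : ℝ => x*Real.log x - x + 1) ((Real.log x + 1) - 1) x :=
    ((Real.hasDerivAt_mul_log hx.ne').sub (hasDerivAt_id x)).add_const 1
  have h2 : HasDerivAt (fun x : ℝ => 2*x+4) 2 x := by
    simpa using ((hasDerivAt_id x).const_mul 2).add_const 4
  have h3 : HasDerivAt (fun x : ℝ => (2*x+4)*(x*Real.log x - x + 1))
      (2*(x*Real.log x - x + 1) + (2*x+4)*((Real.log x + 1) - 1)) x := h2.mul h1
  have h4 : HasDerivAt (fun x : ℝ => 3*(x-1)^2) (3*(2*(x-1)^1*1)) x :=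
    (((hasDerivAt_id x).sub_const 1).pow 2).const_mul 3
  have := h3.sub h4
  exact this.congr_deriv (by ring)

private lemma key_ineq {x : ℝ} (hx : 0 < x) :
    3*(x-1)^2 ≤ (2*x+4)*(x*Real.log x - x + 1) := by
  set h : ℝ → ℝ := fun x => (2*x+4)*(x*Real.log x - x + 1) - 3*(x-1)^2 with hh
  have hcont : Continuous h := by
    apply Continuous.sub
    · exact (by continuity : Continuous fun x : ℝ => 2*x+4).mul
        ((Real.continuous_mul_log.sub continuous_id).add continuous_const)
    · continuity
  have h1 : h 1 = 0 := by simp [hh]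
  have hge : 0 ≤ h x := by
    rcases le_or_gt 1 x with hx1 | hx1
    · -- monotone on Ici 1
      have hmono : MonotoneOn h (Set.Ici (1:ℝ)) := by
        apply monotoneOn_of_deriv_nonneg (convex_Ici 1) hcont.continuousOn
        · rw [interior_Ici]
          intro y hy
          exact (h_deriv (lt_trans one_pos hy)).differentiableAt.differentiableWithinAt
        · rw [interior_Ici]
          intro y hy
          have hy1 : (1:ℝ) < y := hy
          rw [(h_deriv (lt_trans one_pos hy1)).deriv]
          have := k_mono (Set.mem_Ioi.2 one_pos) (Set.mem_Ioi.2 (lt_trans one_pos hy1)) hy1.le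
          simp only [Real.log_one] at this
          norm_num at this
          linarith
      have := hmono (Set.mem_Ici.2 le_rfl) (Set.mem_Ici.2 hx1) hx1
      rw [h1] at this; exact this
    · -- antitone on Icc 0 1
      have hanti : AntitoneOn h (Set.Icc (0:ℝ) 1) := by
        apply antitoneOn_of_deriv_nonpos (convex_Icc 0 1) hcont.continuousOn
        · rw [interior_Icc]
          intro y hy
          exact (h_deriv hy.1).differentiableAt.differentiableWithinAt
        · rw [interior_Icc]
          intro y hy
          rw [(h_deriv hy.1).deriv]
          have := k_mono (Set.mem_Ioi.2 hy.1) (Set.mem_Ioi.2 one_pos) hy.2.le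
          simp only [Real.log_one] at this
          norm_num at this
          linarith
      have := hanti (Set.mem_Icc.2 ⟨hx.le, hx1.le⟩) (Set.mem_Icc.2 ⟨zero_le_one, le_rfl⟩) hx1.le
      rw [h1] at this; exact this
  simpa [hh] using hge

/-- pointwise Pinsker inequality -/
private lemma pinsker_pt {a b : ℝ} (ha : 0 ≤ a) (hb : 0 ≤ b) (hab : b = 0 → a = 0) :
    3*(a-b)^2 ≤ (2*a+4*b)*(a*Real.log a - a*Real.log b - a + b) := by
  rcases eq_or_lt_of_le hb with hb0 | hb0
  · have ha0 := hab hb0.symm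
    simp [← hb0, ha0]
  rcases eq_or_lt_of_le ha with ha0 | ha0
  · rw [← ha0]
    ring_nf
    nlinarith [hb0]
  · have hx : 0 < a / b := div_pos ha0 hb0
    have h := key_ineq hx
    rw [Real.log_div ha0.ne' hb0.ne'] at h
    have h2 := mul_le_mul_of_nonneg_left h (le_of_lt (mul_pos hb0 hb0))
    have e1 : (b*b) * (3*(a/b-1)^2) = 3*(a-b)^2 := by
      field_simp
    have e2 : (b*b) * ((2*(a/b)+4)*((a/b)*(Real.log a - Real.log b) - a/b + 1))
        = (2*a+4*b)*(a*Real.log a - a*Real.log b - a + b) := by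
      field_simp
      try tauto
    rw [e1, e2] at h2
    exact h2

/-- finite Pinsker inequality -/
private lemma pinsker {ι : Type*} [Fintype ι] (p q : ι → ℝ)
    (hp0 : ∀ x, 0 ≤ p x) (hq0 : ∀ x, 0 ≤ q x)
    (hps : ∑ x, p x = 1) (hqs : ∑ x, q x = 1)
    (hsup : ∀ x, q x = 0 → p x = 0) :
    (∑ x, |p x - q x|)^2 ≤ 2 * ∑ x, (p x * Real.log (p x) - p x * Real.log (q x)) := by
  set f : ι → ℝ := fun x => Real.sqrt 3 * |p x - q x| / Real.sqrt (2*p x + 4*q x) with hf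
  set g : ι → ℝ := fun x => Real.sqrt (2*p x + 4*q x) / Real.sqrt 3 with hg
  have hs0 : ∀ x, 0 ≤ 2*p x + 4*q x := fun x => by nlinarith [hp0 x, hq0 x]
  have hfg : ∀ x, f x * g x = |p x - q x| := by
    intro x
    rcases eq_or_lt_of_le (hs0 x) with h0 | h0
    · have hpq : p x = 0 ∧ q x = 0 := by constructor <;> nlinarith [hp0 x, hq0 x]
      simp [hf, hg, hpq.1, hpq.2]
    · have h3 : Real.sqrt 3 ≠ 0 := by positivity
      have hs : Real.sqrt (2*p x + 4*q x) ≠ 0 := by positivity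
      rw [hf, hg]; field_simp
      exact mul_inv_cancel_right₀ (Real.sqrt_ne_zero'.2 (by linarith)) _
      try ring
  have hg2 : ∀ x, g x ^ 2 = (2*p x + 4*q x) / 3 := by
    intro x
    rw [hg]
    rw [div_pow, Real.sq_sqrt (hs0 x), Real.sq_sqrt (by norm_num : (0:ℝ) ≤ 3)]
  have hf2 : ∀ x, f x ^ 2 ≤ p x * Real.log (p x) - p x * Real.log (q x) - p x + q x := by
    intro x
    rcases eq_or_lt_of_le (hs0 x) with h0 | h0
    · have hpq : p x = 0 ∧ q x = 0 := by constructor <;> nlinarith [hp0 x, hq0 x]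
      simp [hf, hpq.1, hpq.2]
    · have : f x ^ 2 = 3 * (p x - q x)^2 / (2*p x + 4*q x) := by
        rw [hf, div_pow, mul_pow, Real.sq_sqrt (by norm_num : (0:ℝ) ≤ 3),
          Real.sq_sqrt (hs0 x), sq_abs]
      rw [this, div_le_iff₀ h0]
      have := pinsker_pt (hp0 x) (hq0 x) (hsup x)
      nlinarith [this]
  have hCS := Finset.sum_mul_sq_le_sq_mul_sq Finset.univ f g
  have hsum_fg : ∑ x, f x * g x = ∑ x, |p x - q x| := Finset.sum_congr rfl fun x _ => hfg x
  have hsum_g2 : ∑ x, g x ^ 2 = 2 := by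
    rw [Finset.sum_congr rfl fun x _ => hg2 x]
    rw [← Finset.sum_div, Finset.sum_add_distrib, ← Finset.mul_sum, ← Finset.mul_sum,
      hps, hqs]
    norm_num
  have hsum_f2 : ∑ x, f x ^ 2 ≤ ∑ x, (p x * Real.log (p x) - p x * Real.log (q x)) := by
    calc ∑ x, f x ^ 2 ≤ ∑ x, (p x * Real.log (p x) - p x * Real.log (q x) - p x + q x) :=
          Finset.sum_le_sum fun x _ => hf2 x
    _ = ∑ x, (p x * Real.log (p x) - p x * Real.log (q x)) - ∑ x, p x + ∑ x, q x := by
          rw [Finset.sum_add_distrib, Finset.sum_sub_distrib]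
    _ = _ := by rw [hps, hqs]; ring
  have hF2nn : 0 ≤ ∑ x, f x ^ 2 := Finset.sum_nonneg fun x _ => sq_nonneg _
  calc (∑ x, |p x - q x|)^2 = (∑ x, f x * g x)^2 := by rw [hsum_fg]
  _ ≤ (∑ x, f x ^ 2) * ∑ x, g x ^ 2 := hCS
  _ = 2 * ∑ x, f x ^ 2 := by rw [hsum_g2]; ring
  _ ≤ 2 * ∑ x, (p x * Real.log (p x) - p x * Real.log (q x)) := by linarith

/-- entropy block strong-convexity via Pinsker -/
private lemma block_sc {ι : Type*} [Fintype ι] (p q : ι → ℝ) (t : ℝ)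
    (hp0 : ∀ x, 0 ≤ p x) (hq0 : ∀ x, 0 ≤ q x)
    (hps : ∑ x, p x = 1) (hqs : ∑ x, q x = 1)
    (ht0 : 0 < t) (ht1 : t < 1) :
    (1/2) * (t*(1-t)) * (∑ x, |p x - q x|)^2 ≤
      (1-t) * (∑ x, p x * Real.log (p x)) + t * (∑ x, q x * Real.log (q x))
        - ∑ x, ((1-t)*p x + t*q x) * Real.log ((1-t)*p x + t*q x) := by
  set r : ι → ℝ := fun x => (1-t)*p x + t*q x with hr
  have hr0 : ∀ x, 0 ≤ r x := fun x => by
    have := hp0 x; have := hq0 x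
    show 0 ≤ (1-t)*p x + t*q x
    nlinarith
  have hrs : ∑ x, r x = 1 := by
    rw [hr]
    rw [Finset.sum_add_distrib, ← Finset.mul_sum, ← Finset.mul_sum, hps, hqs]
    ring
  have hsupp : ∀ x, r x = 0 → p x = 0 := by
    intro x hx
    have hx' : (1-t)*p x + t*q x = 0 := hx
    have := hp0 x; have := hq0 x
    nlinarith
  have hsupq : ∀ x, r x = 0 → q x = 0 := by
    intro x hx
    have hx' : (1-t)*p x + t*q x = 0 := hx
    have := hp0 x; have := hq0 x
    nlinarith
  have hP := pinsker p r hp0 hr0 hps hrs hsupp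
  have hQ := pinsker q r hq0 hr0 hqs hrs hsupq
  have hpr : ∑ x, |p x - r x| = t * ∑ x, |p x - q x| := by
    rw [Finset.mul_sum]
    refine Finset.sum_congr rfl fun x _ => ?_
    have : p x - r x = t * (q x - p x) * (-1) := by rw [hr]; ring
    rw [this, abs_mul, abs_mul, abs_of_pos ht0]
    rw [abs_neg, abs_one, mul_one, ← abs_neg (q x - p x)]
    ring_nf
  have hqr : ∑ x, |q x - r x| = (1-t) * ∑ x, |p x - q x| := by
    rw [Finset.mul_sum]
    refine Finset.sum_congr rfl fun x _ => ?_
    have : q x - r x = (1-t) * (q x - p x) := by rw [hr]; ring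
    rw [this, abs_mul, abs_of_pos (by linarith : (0:ℝ) < 1 - t), ← abs_neg (q x - p x)]
    ring_nf
  -- identity: ∑ r log r = (1-t) ∑ p log r + t ∑ q log r
  have hid : ∑ x, r x * Real.log (r x)
      = (1-t) * (∑ x, p x * Real.log (r x)) + t * (∑ x, q x * Real.log (r x)) := by
    rw [Finset.mul_sum, Finset.mul_sum, ← Finset.sum_add_distrib]
    refine Finset.sum_congr rfl fun x _ => ?_
    rw [hr]; ring
  have hPd : ∑ x, (p x * Real.log (p x) - p x * Real.log (r x))
      = (∑ x, p x * Real.log (p x)) - ∑ x, p x * Real.log (r x) := by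
    rw [Finset.sum_sub_distrib]
  have hQd : ∑ x, (q x * Real.log (q x) - q x * Real.log (r x))
      = (∑ x, q x * Real.log (q x)) - ∑ x, q x * Real.log (r x) := by
    rw [Finset.sum_sub_distrib]
  rw [hPd] at hP
  rw [hQd] at hQ
  rw [hpr] at hP
  rw [hqr] at hQ
  have hgoal : (1-t) * (∑ x, p x * Real.log (p x)) + t * (∑ x, q x * Real.log (q x))
      - ∑ x, r x * Real.log (r x)
      = (1-t) * ((∑ x, p x * Real.log (p x)) - ∑ x, p x * Real.log (r x))
        + t * ((∑ x, q x * Real.log (q x)) - ∑ x, q x * Real.log (r x)) := by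
    rw [hid]; ring
  have h1 : 0 ≤ ∑ x, |p x - q x| := Finset.sum_nonneg fun x _ => abs_nonneg _
  calc (1/2) * (t*(1-t)) * (∑ x, |p x - q x|)^2
      = (1-t) * ((t * ∑ x, |p x - q x|)^2 / 2) + t * (((1-t) * ∑ x, |p x - q x|)^2 / 2) := by
        ring
  _ ≤ (1-t) * ((∑ x, p x * Real.log (p x)) - ∑ x, p x * Real.log (r x))
        + t * ((∑ x, q x * Real.log (q x)) - ∑ x, q x * Real.log (r x)) := by
        have hA : (t * ∑ x, |p x - q x|)^2 / 2 ≤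
            (∑ x, p x * Real.log (p x)) - ∑ x, p x * Real.log (r x) := by linarith
        have hB : ((1-t) * ∑ x, |p x - q x|)^2 / 2 ≤
            (∑ x, q x * Real.log (q x)) - ∑ x, q x * Real.log (r x) := by linarith
        have h1t : (0:ℝ) ≤ 1 - t := by linarith
        nlinarith [mul_le_mul_of_nonneg_left hA h1t, mul_le_mul_of_nonneg_left hB ht0.le]
  _ = (1-t) * (∑ x, p x * Real.log (p x)) + t * (∑ x, q x * Real.log (q x))
      - ∑ x, r x * Real.log (r x) := hgoal.symm

end Stmt16

namespace Stmt16B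

/-- chord lower bound for x log x : for 0 ≤ a ≤ b, (b-a) log b ≤ b log b - a log a -/
private lemma chord_lower {a b : ℝ} (ha : 0 ≤ a) (hab : a ≤ b) :
    (b - a) * Real.log b ≤ b * Real.log b - a * Real.log a := by
  rcases eq_or_lt_of_le ha with ha0 | ha0
  · rw [← ha0]; simp
  · have h : Real.log a ≤ Real.log b := Real.log_le_log ha0 hab
    nlinarith [mul_le_mul_of_nonneg_left h ha]

/-- chord upper bound : for 0 ≤ a ≤ b, b log b - a log a ≤ (b-a)(1 + log b) -/
private lemma chord_upper {a b : ℝ} (ha : 0 ≤ a) (hab : a ≤ b) :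
    b * Real.log b - a * Real.log a ≤ (b - a) * (1 + Real.log b) := by
  rcases eq_or_lt_of_le ha with ha0 | ha0
  · rw [← ha0]; have hb : 0 ≤ b := le_trans ha hab
    simp; nlinarith
  · have hb : 0 < b := lt_of_lt_of_le ha0 hab
    have h : Real.log (b/a) ≤ b/a - 1 := Real.log_le_sub_one_of_pos (div_pos hb ha0)
    rw [Real.log_div hb.ne' ha0.ne'] at h
    have h2 := mul_le_mul_of_nonneg_left h ha
    have h3 : a * (b/a - 1) = b - a := by field_simp
    rw [h3] at h2
    nlinarith

/-- Lipschitz-type bound for x log x when one point is ≥ τ. -/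
lemma abs_xlogx_le {τ a b : ℝ} (hτ : 0 < τ) (hL : 1 ≤ Real.log (1/τ))
    (ha0 : 0 ≤ a) (ha1 : a ≤ 1) (hbτ : τ ≤ b) (hb1 : b ≤ 1) :
    |b * Real.log b - a * Real.log a| ≤ Real.log (1/τ) * |b - a| := by
  have hτb : Real.log τ ≤ Real.log b := Real.log_le_log hτ hbτ
  have hinv : Real.log (1/τ) = - Real.log τ := by rw [one_div, Real.log_inv]
  rcases le_total a b with hab | hab
  · have h1 := chord_lower ha0 hab
    have h2 := chord_upper ha0 hab
    rw [abs_of_nonneg (by linarith : (0:ℝ) ≤ b - a)]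
    have hlogb1 : Real.log b ≤ 0 := Real.log_nonpos (by linarith) hb1
    rw [abs_le]
    constructor
    · -- -(L * (b-a)) ≤ b log b - a log a
      have : (b - a) * Real.log b ≥ (b - a) * Real.log τ :=
        mul_le_mul_of_nonneg_left hτb (by linarith)
      nlinarith
    · -- b log b - a log a ≤ L (b-a)
      have : (b - a) * (1 + Real.log b) ≤ (b - a) * 1 := by
        apply mul_le_mul_of_nonneg_left (by linarith) (by linarith)
      nlinarith
  · -- b ≤ a, both ≥ τ
    have haτ : τ ≤ a := le_trans hbτ hab
    have ha0' : 0 < a := lt_of_lt_of_le hτ haτ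
    have hτa : Real.log τ ≤ Real.log a := Real.log_le_log hτ haτ
    have h1 := chord_lower (le_trans hτ.le hbτ) hab
    have h2 := chord_upper (le_trans hτ.le hbτ) hab
    rw [abs_of_nonpos (by linarith : b - a ≤ 0)]
    have hloga1 : Real.log a ≤ 0 := Real.log_nonpos (by linarith) ha1
    rw [abs_le]
    constructor
    · have : (a - b) * Real.log a ≥ (a - b) * Real.log τ :=
        mul_le_mul_of_nonneg_left hτa (by linarith)
      nlinarith
    · have : (a - b) * (1 + Real.log a) ≤ (a - b) * 1 := by
        apply mul_le_mul_of_nonneg_left (by linarith) (by linarith)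
      nlinarith

end Stmt16B

section PolyAux

variable {V : Type} [Fintype V] {d : ℕ} (E : Finset (V × V))

/-- total mass of a marginal vector -/
private def mass (Γ : MV V d) : ℝ :=
  (∑ i : V, ∑ x : Fin d, Γ.1 i x) + ∑ e ∈ E, ∑ x : Fin d, ∑ y : Fin d, Γ.2 e x y

/-- negative entropy part -/
private def Phi (Γ : MV V d) : ℝ :=
  (∑ i : V, ∑ x : Fin d, Γ.1 i x * Real.log (Γ.1 i x)) +
    ∑ e ∈ E, ∑ x : Fin d, ∑ y : Fin d, Γ.2 e x y * Real.log (Γ.2 e x y)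

private lemma mvH_eq (Γ : MV V d) : mvH E Γ = mass E Γ - Phi E Γ := by
  simp only [mvH, mass, Phi, mul_one_sub, Finset.sum_sub_distrib]
  ring

private lemma mass_eq {ν : Slk V d} {Γ : MV V d} (h : memSL2 E ν Γ) :
    mass E Γ = (Fintype.card V : ℝ) + E.card := by
  have h1 : ∑ i : V, ∑ x : Fin d, Γ.1 i x = (Fintype.card V : ℝ) := by
    rw [Finset.sum_congr rfl fun i _ => h.2.1 i]
    rw [Finset.sum_const, nsmul_eq_mul, mul_one, Finset.card_univ]
  have h2 : ∑ e ∈ E, ∑ x : Fin d, ∑ y : Fin d, Γ.2 e x y = (E.card : ℝ) := by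
    rw [Finset.sum_congr rfl fun e he => h.2.2.2.2.2 e he]
    simp
  rw [mass, h1, h2]

/-- entries of vertex blocks are at most 1 -/
private lemma vert_le_one {ν : Slk V d} {Γ : MV V d} (h : memSL2 E ν Γ) :
    ∀ i x, Γ.1 i x ≤ 1 := by
  intro i x
  have := h.2.1 i
  calc Γ.1 i x ≤ ∑ x' : Fin d, Γ.1 i x' :=
        Finset.single_le_sum (fun x' _ => h.1 i x') (Finset.mem_univ x)
  _ = 1 := this

/-- entries of edge blocks are at most 1 -/
private lemma edge_le_one {ν : Slk V d} {Γ : MV V d} (h : memSL2 E ν Γ) :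
    ∀ e ∈ E, ∀ x y, Γ.2 e x y ≤ 1 := by
  intro e he x y
  have hsum := h.2.2.2.2.2 e he
  have h1 : Γ.2 e x y ≤ ∑ y' : Fin d, Γ.2 e x y' :=
    Finset.single_le_sum (fun y' _ => h.2.2.1 e he x y') (Finset.mem_univ y)
  have h2 : ∑ y' : Fin d, Γ.2 e x y' ≤ ∑ x' : Fin d, ∑ y' : Fin d, Γ.2 e x' y' :=
    Finset.single_le_sum
      (fun x' _ => Finset.sum_nonneg fun y' _ => h.2.2.1 e he x' y') (Finset.mem_univ x)
  linarith [hsum ▸ h2, h1]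

/-- the Lipschitz-type bound on the regularized objective -/
private lemma g_diff_le (Cv : V → Fin d → ℝ) (Ce : V × V → Fin d → Fin d → ℝ)
    (Cinf η τ : ℝ) (hη : 0 ≤ η)
    (hCv : ∀ i x, |Cv i x| ≤ Cinf) (hCe : ∀ e ∈ E, ∀ x y, |Ce e x y| ≤ Cinf)
    (hτ0 : 0 < τ) (hL : 1 ≤ Real.log (1/τ))
    (A B : MV V d)
    (hA1 : ∀ i x, 0 ≤ A.1 i x) (hA1' : ∀ i x, A.1 i x ≤ 1)
    (hA2 : ∀ e ∈ E, ∀ x y, 0 ≤ A.2 e x y) (hA2' : ∀ e ∈ E, ∀ x y, A.2 e x y ≤ 1)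
    (hB1 : ∀ i x, τ ≤ B.1 i x) (hB1' : ∀ i x, B.1 i x ≤ 1)
    (hB2 : ∀ e ∈ E, ∀ x y, τ ≤ B.2 e x y) (hB2' : ∀ e ∈ E, ∀ x y, B.2 e x y ≤ 1)
    (hmass : mass E A = mass E B) :
    (η * mvInner E Cv Ce B - mvH E B) - (η * mvInner E Cv Ce A - mvH E A) ≤
      (η * Cinf + Real.log (1/τ)) *
        ((∑ i : V, ∑ x : Fin d, |B.1 i x - A.1 i x|) +
          ∑ e ∈ E, ∑ x : Fin d, ∑ y : Fin d, |B.2 e x y - A.2 e x y|) := by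
  rw [mvH_eq, mvH_eq]
  set ℓ := (∑ i : V, ∑ x : Fin d, |B.1 i x - A.1 i x|) +
      ∑ e ∈ E, ∑ x : Fin d, ∑ y : Fin d, |B.2 e x y - A.2 e x y| with hl
  have hI : mvInner E Cv Ce B - mvInner E Cv Ce A ≤ Cinf * ℓ := by
    rw [mvInner, mvInner, hl, mul_add]
    have h1 : (∑ i : V, ∑ x : Fin d, Cv i x * B.1 i x)
        - (∑ i : V, ∑ x : Fin d, Cv i x * A.1 i x)
        ≤ Cinf * ∑ i : V, ∑ x : Fin d, |B.1 i x - A.1 i x| := by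
      rw [← Finset.sum_sub_distrib, Finset.mul_sum]
      refine Finset.sum_le_sum fun i _ => ?_
      rw [← Finset.sum_sub_distrib, Finset.mul_sum]
      refine Finset.sum_le_sum fun x _ => ?_
      have : Cv i x * B.1 i x - Cv i x * A.1 i x = Cv i x * (B.1 i x - A.1 i x) := by ring
      rw [this]
      calc Cv i x * (B.1 i x - A.1 i x) ≤ |Cv i x * (B.1 i x - A.1 i x)| := le_abs_self _
      _ = |Cv i x| * |B.1 i x - A.1 i x| := abs_mul _ _
      _ ≤ Cinf * |B.1 i x - A.1 i x| :=
          mul_le_mul_of_nonneg_right (hCv i x) (abs_nonneg _)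
    have h2 : (∑ e ∈ E, ∑ x : Fin d, ∑ y : Fin d, Ce e x y * B.2 e x y)
        - (∑ e ∈ E, ∑ x : Fin d, ∑ y : Fin d, Ce e x y * A.2 e x y)
        ≤ Cinf * ∑ e ∈ E, ∑ x : Fin d, ∑ y : Fin d, |B.2 e x y - A.2 e x y| := by
      rw [← Finset.sum_sub_distrib, Finset.mul_sum]
      refine Finset.sum_le_sum fun e he => ?_
      rw [← Finset.sum_sub_distrib, Finset.mul_sum]
      refine Finset.sum_le_sum fun x _ => ?_
      rw [← Finset.sum_sub_distrib, Finset.mul_sum]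
      refine Finset.sum_le_sum fun y _ => ?_
      have : Ce e x y * B.2 e x y - Ce e x y * A.2 e x y
          = Ce e x y * (B.2 e x y - A.2 e x y) := by ring
      rw [this]
      calc Ce e x y * (B.2 e x y - A.2 e x y) ≤ |Ce e x y * (B.2 e x y - A.2 e x y)| :=
            le_abs_self _
      _ = |Ce e x y| * |B.2 e x y - A.2 e x y| := abs_mul _ _
      _ ≤ Cinf * |B.2 e x y - A.2 e x y| :=
          mul_le_mul_of_nonneg_right (hCe e he x y) (abs_nonneg _)
    linarith
  have hPhi : Phi E B - Phi E A ≤ Real.log (1/τ) * ℓ := by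
    rw [Phi, Phi, hl, mul_add]
    have h1 : (∑ i : V, ∑ x : Fin d, B.1 i x * Real.log (B.1 i x))
        - (∑ i : V, ∑ x : Fin d, A.1 i x * Real.log (A.1 i x))
        ≤ Real.log (1/τ) * ∑ i : V, ∑ x : Fin d, |B.1 i x - A.1 i x| := by
      rw [← Finset.sum_sub_distrib, Finset.mul_sum]
      refine Finset.sum_le_sum fun i _ => ?_
      rw [← Finset.sum_sub_distrib, Finset.mul_sum]
      refine Finset.sum_le_sum fun x _ => ?_
      calc B.1 i x * Real.log (B.1 i x) - A.1 i x * Real.log (A.1 i x)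
          ≤ |B.1 i x * Real.log (B.1 i x) - A.1 i x * Real.log (A.1 i x)| := le_abs_self _
      _ ≤ Real.log (1/τ) * |B.1 i x - A.1 i x| :=
          Stmt16B.abs_xlogx_le hτ0 hL (hA1 i x) (hA1' i x) (hB1 i x) (hB1' i x)
    have h2 : (∑ e ∈ E, ∑ x : Fin d, ∑ y : Fin d, B.2 e x y * Real.log (B.2 e x y))
        - (∑ e ∈ E, ∑ x : Fin d, ∑ y : Fin d, A.2 e x y * Real.log (A.2 e x y))
        ≤ Real.log (1/τ) * ∑ e ∈ E, ∑ x : Fin d, ∑ y : Fin d, |B.2 e x y - A.2 e x y| := by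
      rw [← Finset.sum_sub_distrib, Finset.mul_sum]
      refine Finset.sum_le_sum fun e he => ?_
      rw [← Finset.sum_sub_distrib, Finset.mul_sum]
      refine Finset.sum_le_sum fun x _ => ?_
      rw [← Finset.sum_sub_distrib, Finset.mul_sum]
      refine Finset.sum_le_sum fun y _ => ?_
      calc B.2 e x y * Real.log (B.2 e x y) - A.2 e x y * Real.log (A.2 e x y)
          ≤ |B.2 e x y * Real.log (B.2 e x y) - A.2 e x y * Real.log (A.2 e x y)| :=
            le_abs_self _
      _ ≤ Real.log (1/τ) * |B.2 e x y - A.2 e x y| :=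
          Stmt16B.abs_xlogx_le hτ0 hL (hA2 e he x y) (hA2' e he x y)
            (hB2 e he x y) (hB2' e he x y)
    linarith
  have hηI := mul_le_mul_of_nonneg_left hI hη
  rw [mul_sub] at hηI
  have hre : (η * Cinf + Real.log (1/τ)) * ℓ = η * (Cinf * ℓ) + Real.log (1/τ) * ℓ := by ring
  have hlnn : 0 ≤ ℓ := by
    rw [hl]
    have : (0:ℝ) ≤ ∑ i : V, ∑ x : Fin d, |B.1 i x - A.1 i x| :=
      Finset.sum_nonneg fun i _ => Finset.sum_nonneg fun x _ => abs_nonneg _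
    have : (0:ℝ) ≤ ∑ e ∈ E, ∑ x : Fin d, ∑ y : Fin d, |B.2 e x y - A.2 e x y| :=
      Finset.sum_nonneg fun e _ => Finset.sum_nonneg fun x _ =>
        Finset.sum_nonneg fun y _ => abs_nonneg _
    linarith
  have key : η * mvInner E Cv Ce B - (mass E B - Phi E B) -
      (η * mvInner E Cv Ce A - (mass E A - Phi E A))
      = (η * mvInner E Cv Ce B - η * mvInner E Cv Ce A) + (Phi E B - Phi E A)
        - (mass E B - mass E A) := by ring
  rw [key, hmass, sub_self, sub_zero, hre]
  exact add_le_add hηI hPhi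

end PolyAux

section Construction

variable {V : Type} [Fintype V] [DecidableEq V] {d : ℕ}

set_option maxHeartbeats 2000000 in
private lemma construction (hd : 1 ≤ d) (E : Finset (V × V)) (τ : ℝ)
    (hτ0 : 0 < τ) (hτ : τ ≤ 1/(8*(d:ℝ)^2))
    (ν : Slk V d) (hν : isSlack E ν)
    (hinf : ∀ e ∈ E, ∀ x : Fin d, |ν.1 e x| ≤ 1/(4*(d:ℝ)) ∧ |ν.2 e x| ≤ 1/(4*(d:ℝ)))
    (Γη : MV V d) (hmem : memSL2 E (0 : Slk V d) Γη) :
    ∃ Gh : MV V d, memSL2 E ν Gh ∧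
      (∀ i x, τ ≤ Gh.1 i x) ∧ (∀ e ∈ E, ∀ x y, τ ≤ Gh.2 e x y) ∧
      ((∑ i : V, ∑ x : Fin d, |Gh.1 i x - Γη.1 i x|) +
        ∑ e ∈ E, ∑ x : Fin d, ∑ y : Fin d, |Gh.2 e x y - Γη.2 e x y|) ≤
        (4*(degG E : ℝ) + 2) * slkL1 E ν +
          4*((E.card : ℝ) + (Fintype.card V : ℝ))*(d:ℝ)^2*τ := by
  have hd1 : (1:ℝ) ≤ (d:ℝ) := by exact_mod_cast hd
  have hd0 : (0:ℝ) < (d:ℝ) := by linarith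
  set dR : ℝ := (d:ℝ) with hdR
  set Λ : ℝ := 2*dR^2*τ with hΛ
  set s : ℝ := 1 - Λ with hsdef
  have hΛ0 : 0 < Λ := by rw [hΛ]; nlinarith [pow_pos hd0 2, hτ0]
  have hΛ14 : Λ ≤ 1/4 := by
    rw [hΛ]
    have h2 : (0:ℝ) < dR^2 := pow_pos hd0 2
    have := mul_le_mul_of_nonneg_left hτ (le_of_lt (by nlinarith [pow_pos hd0 2] : (0:ℝ) < 2*dR^2))
    calc 2*dR^2*τ = 2*dR^2*τ := rfl
    _ ≤ 2*dR^2*(1/(8*dR^2)) := by nlinarith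
    _ = 1/4 := by
        rw [mul_one_div, div_eq_div_iff (by nlinarith [pow_pos hd0 2] : (0:ℝ) < 8*dR^2).ne'
          (by norm_num : ((4:ℝ)) ≠ 0)]
        ring
  have hs34 : 3/4 ≤ s := by rw [hsdef]; linarith
  have hs1 : s ≤ 1 := by rw [hsdef]; linarith
  have hs0 : 0 < s := by linarith
  clear_value dR Λ s
  -- the vertex mixing weights
  set w : V → Fin d → ℝ := fun i x =>
    min ((∑ e ∈ E, ((if e.1 = i then |ν.1 e x| else 0) +
      if e.2 = i then |ν.2 e x| else 0)) / s) (1/(3*dR)) with hw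
  clear_value w
  have hSnn : ∀ i x, (0:ℝ) ≤ (∑ e ∈ E, ((if e.1 = i then |ν.1 e x| else 0) +
      if e.2 = i then |ν.2 e x| else 0)) :=
    fun i x => Finset.sum_nonneg fun e _ => add_nonneg
      (by split <;> simp [abs_nonneg]) (by split <;> simp [abs_nonneg])
  have hw0 : ∀ i x, 0 ≤ w i x := by
    intro i x
    rw [hw]
    exact le_min (div_nonneg (hSnn i x) hs0.le)
      (one_div_nonneg.2 (by linarith))
  have hwc : ∀ i x, w i x ≤ 1/(3*dR) := by
    intro i x
    rw [hw]
    exact min_le_right _ _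
  have hnu_le : ∀ e ∈ E, ∀ x : Fin d, |ν.1 e x|/s ≤ 1/(3*dR) ∧ |ν.2 e x|/s ≤ 1/(3*dR) := by
    intro e he x
    have key : ∀ t : ℝ, |t| ≤ 1/(4*dR) → |t|/s ≤ 1/(3*dR) := by
      intro t ht
      rw [div_le_iff₀ hs0]
      have h1 : 1/(3*dR) * (3/4) ≤ 1/(3*dR) * s :=
        mul_le_mul_of_nonneg_left hs34 (one_div_nonneg.2 (by linarith))
      have h2 : 1/(3*dR) * (3/4) = 1/(4*dR) := by
        have hne : dR ≠ 0 := hd0.ne'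
        field_simp
      linarith
    exact ⟨key _ (hinf e he x).1, key _ (hinf e he x).2⟩
  have hwdom1 : ∀ e ∈ E, ∀ x, |ν.1 e x|/s ≤ w e.1 x := by
    intro e he x
    rw [hw]
    refine le_min ?_ (hnu_le e he x).1
    refine div_le_div_of_nonneg_right ?_ hs0.le
    calc |ν.1 e x| = (if e.1 = e.1 then |ν.1 e x| else 0) := by simp
    _ ≤ (if e.1 = e.1 then |ν.1 e x| else 0) + (if e.2 = e.1 then |ν.2 e x| else 0) := by
        have h2 : (0:ℝ) ≤ (if e.2 = e.1 then |ν.2 e x| else 0) := by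
          split
          exacts [abs_nonneg _, le_rfl]
        linarith
    _ ≤ ∑ e' ∈ E, ((if e'.1 = e.1 then |ν.1 e' x| else 0) +
        if e'.2 = e.1 then |ν.2 e' x| else 0) := by
        refine Finset.single_le_sum (f := fun e' => (if e'.1 = e.1 then |ν.1 e' x| else 0) +
          if e'.2 = e.1 then |ν.2 e' x| else 0) (fun e' _ => add_nonneg
          (by split <;> simp [abs_nonneg]) (by split <;> simp [abs_nonneg])) he
  have hwdom2 : ∀ e ∈ E, ∀ y, |ν.2 e y|/s ≤ w e.2 y := by
    intro e he y
    rw [hw]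
    refine le_min ?_ (hnu_le e he y).2
    refine div_le_div_of_nonneg_right ?_ hs0.le
    calc |ν.2 e y| = (if e.2 = e.2 then |ν.2 e y| else 0) := by simp
    _ ≤ (if e.1 = e.2 then |ν.1 e y| else 0) + (if e.2 = e.2 then |ν.2 e y| else 0) := by
        have h2 : (0:ℝ) ≤ (if e.1 = e.2 then |ν.1 e y| else 0) := by
          split
          exacts [abs_nonneg _, le_rfl]
        linarith
    _ ≤ ∑ e' ∈ E, ((if e'.1 = e.2 then |ν.1 e' y| else 0) +
        if e'.2 = e.2 then |ν.2 e' y| else 0) := by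
        refine Finset.single_le_sum (f := fun e' => (if e'.1 = e.2 then |ν.1 e' y| else 0) +
          if e'.2 = e.2 then |ν.2 e' y| else 0) (fun e' _ => add_nonneg
          (by split <;> simp [abs_nonneg]) (by split <;> simp [abs_nonneg])) he
  set β : V → ℝ := fun i => ∑ x : Fin d, w i x with hβ
  clear_value β
  have hβ0 : ∀ i, 0 ≤ β i := by
    intro i
    rw [hβ]
    exact Finset.sum_nonneg fun x _ => hw0 i x
  have hβ3 : ∀ i, β i ≤ 1/3 := by
    intro i
    rw [hβ]
    calc ∑ x : Fin d, w i x ≤ ∑ x : Fin d, 1/(3*dR) := Finset.sum_le_sum fun x _ => hwc i x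
    _ = d * (1/(3*dR)) := by rw [Finset.sum_const, Finset.card_univ, Fintype.card_fin,
          nsmul_eq_mul]
    _ = 1/3 := by
        rw [← hdR, mul_one_div, div_eq_div_iff (by linarith : (0:ℝ) < 3*dR).ne'
          (by norm_num : ((3:ℝ)) ≠ 0)]
        ring
  set a : (V × V) → Fin d → ℝ := fun e x => w e.1 x + ν.1 e x / s with ha
  set b : (V × V) → Fin d → ℝ := fun e y => w e.2 y + ν.2 e y / s with hb
  clear_value a b
  have ha0 : ∀ e ∈ E, ∀ x, 0 ≤ a e x := by
    intro e he x
    have h1 := hwdom1 e he x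
    have h2 : -(|ν.1 e x|/s) ≤ ν.1 e x / s :=
      div_le_div_of_nonneg_right (neg_abs_le _) hs0.le |>.trans_eq' (by rw [neg_div])
    rw [ha]
    show 0 ≤ w e.1 x + ν.1 e x / s
    linarith
  have hb0 : ∀ e ∈ E, ∀ y, 0 ≤ b e y := by
    intro e he y
    have h1 := hwdom2 e he y
    have h2 : -(|ν.2 e y|/s) ≤ ν.2 e y / s :=
      div_le_div_of_nonneg_right (neg_abs_le _) hs0.le |>.trans_eq' (by rw [neg_div])
    rw [hb]
    show 0 ≤ w e.2 y + ν.2 e y / s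
    linarith
  have hasum : ∀ e ∈ E, ∑ x, a e x = β e.1 := by
    intro e he
    rw [ha, hβ]
    show ∑ x, (w e.1 x + ν.1 e x / s) = ∑ x, w e.1 x
    rw [Finset.sum_add_distrib, ← Finset.sum_div, (hν e he).1, zero_div, add_zero]
  have hbsum : ∀ e ∈ E, ∑ y, b e y = β e.2 := by
    intro e he
    rw [hb, hβ]
    show ∑ y, (w e.2 y + ν.2 e y / s) = ∑ y, w e.2 y
    rw [Finset.sum_add_distrib, ← Finset.sum_div, (hν e he).2, zero_div, add_zero]
  -- the intermediate point in the slack polytope for ν/s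
  set G1 : V → Fin d → ℝ := fun i x => (1 - β i) * Γη.1 i x + w i x with hG1
  set G2 : (V × V) → Fin d → Fin d → ℝ := fun e x y =>
    (1-β e.1)*(1-β e.2)*Γη.2 e x y + ((1-β e.1)*Γη.1 e.1 x) * b e y +
      a e x * ((1-β e.2) * Γη.1 e.2 y) + a e x * b e y with hG2
  clear_value G1 G2
  have hG1nn : ∀ i x, 0 ≤ G1 i x := by
    intro i x
    have := hβ3 i
    have := hmem.1 i x
    have := hw0 i x
    rw [hG1]
    show 0 ≤ (1 - β i) * Γη.1 i x + w i x
    nlinarith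
  have hG1sum : ∀ i, ∑ x, G1 i x = 1 := by
    intro i
    rw [hG1]
    show ∑ x, ((1 - β i) * Γη.1 i x + w i x) = 1
    rw [Finset.sum_add_distrib, ← Finset.mul_sum, hmem.2.1 i]
    have hbi : ∑ x, w i x = β i := (congrFun hβ i).symm
    rw [hbi]
    ring
  have hG2nn : ∀ e ∈ E, ∀ x y, 0 ≤ G2 e x y := by
    intro e he x y
    have h1 := hβ3 e.1; have h2 := hβ3 e.2
    have h3 := hβ0 e.1; have h4 := hβ0 e.2
    have h5 := hmem.2.2.1 e he x y
    have h6 := hmem.1 e.1 x; have h7 := hmem.1 e.2 y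
    have h8 := ha0 e he x; have h9 := hb0 e he y
    rw [hG2]
    show 0 ≤ (1-β e.1)*(1-β e.2)*Γη.2 e x y + ((1-β e.1)*Γη.1 e.1 x) * b e y +
      a e x * ((1-β e.2) * Γη.1 e.2 y) + a e x * b e y
    nlinarith [mul_nonneg (mul_nonneg (by linarith : (0:ℝ) ≤ 1 - β e.1)
        (by linarith : (0:ℝ) ≤ 1 - β e.2)) h5,
      mul_nonneg (mul_nonneg (by linarith : (0:ℝ) ≤ 1 - β e.1) h6) h9,
      mul_nonneg h8 (mul_nonneg (by linarith : (0:ℝ) ≤ 1 - β e.2) h7),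
      mul_nonneg h8 h9]
  have hzero1 : ∀ e x, (0 : Slk V d).1 e x = 0 := fun e x => rfl
  have hzero2 : ∀ e y, (0 : Slk V d).2 e y = 0 := fun e y => rfl
  have hηrow : ∀ e ∈ E, ∀ x, ∑ y, Γη.2 e x y = Γη.1 e.1 x := by
    intro e he x
    have := hmem.2.2.2.1 e he x
    rw [hzero1] at this
    linarith
  have hηcol : ∀ e ∈ E, ∀ y, ∑ x, Γη.2 e x y = Γη.1 e.2 y := by
    intro e he y
    have := hmem.2.2.2.2.1 e he y
    rw [hzero2] at this
    linarith
  have hrow : ∀ e ∈ E, ∀ x, ∑ y, G2 e x y = G1 e.1 x + ν.1 e x / s := by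
    intro e he x
    rw [hG2]
    show ∑ y, ((1-β e.1)*(1-β e.2)*Γη.2 e x y + ((1-β e.1)*Γη.1 e.1 x) * b e y +
      a e x * ((1-β e.2) * Γη.1 e.2 y) + a e x * b e y) = G1 e.1 x + ν.1 e x / s
    rw [show (fun y => (1-β e.1)*(1-β e.2)*Γη.2 e x y + ((1-β e.1)*Γη.1 e.1 x) * b e y +
      a e x * ((1-β e.2) * Γη.1 e.2 y) + a e x * b e y) = fun y =>
      ((1-β e.1)*(1-β e.2)*Γη.2 e x y + ((1-β e.1)*Γη.1 e.1 x) * b e y) +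
      (a e x * ((1-β e.2) * Γη.1 e.2 y) + a e x * b e y) from funext fun y => by ring]
    simp only [Finset.sum_add_distrib, ← Finset.mul_sum]
    rw [hηrow e he x, hbsum e he, hmem.2.1 e.2]
    rw [show a e x = w e.1 x + ν.1 e x / s from by rw [ha],
      show G1 e.1 x = (1 - β e.1) * Γη.1 e.1 x + w e.1 x from by rw [hG1]]
    ring
  have hcol : ∀ e ∈ E, ∀ y, ∑ x, G2 e x y = G1 e.2 y + ν.2 e y / s := by
    intro e he y
    rw [hG2]
    show ∑ x, ((1-β e.1)*(1-β e.2)*Γη.2 e x y + ((1-β e.1)*Γη.1 e.1 x) * b e y +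
      a e x * ((1-β e.2) * Γη.1 e.2 y) + a e x * b e y) = G1 e.2 y + ν.2 e y / s
    rw [show (fun x => (1-β e.1)*(1-β e.2)*Γη.2 e x y + ((1-β e.1)*Γη.1 e.1 x) * b e y +
      a e x * ((1-β e.2) * Γη.1 e.2 y) + a e x * b e y) = fun x =>
      ((1-β e.1)*(1-β e.2)*Γη.2 e x y + ((1-β e.2) * Γη.1 e.2 y + b e y) * a e x) +
      (b e y * ((1-β e.1)*Γη.1 e.1 x)) from funext fun x => by ring]
    simp only [Finset.sum_add_distrib, ← Finset.mul_sum]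
    rw [hηcol e he y, hasum e he, hmem.2.1 e.1]
    rw [show b e y = w e.2 y + ν.2 e y / s from by rw [hb],
      show G1 e.2 y = (1 - β e.2) * Γη.1 e.2 y + w e.2 y from by rw [hG1]]
    ring
  have htot : ∀ e ∈ E, ∑ x, ∑ y, G2 e x y = 1 := by
    intro e he
    rw [Finset.sum_congr rfl fun x _ => hrow e he x]
    rw [Finset.sum_add_distrib, hG1sum e.1, ← Finset.sum_div, (hν e he).1, zero_div, add_zero]
  set Gh : MV V d := (fun i x => s * G1 i x + 2*dR*τ, fun e x y => s * G2 e x y + 2*τ) with hGhdef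
  clear_value Gh
  have hGh1 : ∀ i x, Gh.1 i x = s * G1 i x + 2*dR*τ := by intro i x; rw [hGhdef]
  have hGh2 : ∀ e x y, Gh.2 e x y = s * G2 e x y + 2*τ := by intro e x y; rw [hGhdef]
  have hconst1 : ∑ _x : Fin d, (2*dR*τ) = Λ := by
    rw [Finset.sum_const, Finset.card_univ, Fintype.card_fin, nsmul_eq_mul, ← hdR, hΛ]; ring
  have hconst2 : ∑ _y : Fin d, (2*τ) = 2*dR*τ := by
    rw [Finset.sum_const, Finset.card_univ, Fintype.card_fin, nsmul_eq_mul, ← hdR]; ring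
  have hGh1sum : ∀ i, ∑ x, Gh.1 i x = 1 := by
    intro i
    simp only [hGh1]
    rw [Finset.sum_add_distrib, ← Finset.mul_sum, hG1sum i, hconst1, hsdef]; ring
  have hGhrow : ∀ e ∈ E, ∀ x, ∑ y, Gh.2 e x y = Gh.1 e.1 x + ν.1 e x := by
    intro e he x
    simp only [hGh2]
    rw [Finset.sum_add_distrib, ← Finset.mul_sum, hrow e he x, hconst2, hGh1,
      mul_add, mul_div_cancel₀ _ hs0.ne']
    ring
  have hGhcol : ∀ e ∈ E, ∀ y, ∑ x, Gh.2 e x y = Gh.1 e.2 y + ν.2 e y := by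
    intro e he y
    simp only [hGh2]
    rw [Finset.sum_add_distrib, ← Finset.mul_sum, hcol e he y, hconst2, hGh1,
      mul_add, mul_div_cancel₀ _ hs0.ne']
    ring
  have hGhmem : memSL2 E ν Gh := by
    refine ⟨?_, hGh1sum, ?_, hGhrow, hGhcol, ?_⟩
    · intro i x
      rw [hGh1]
      have h1 := mul_nonneg hs0.le (hG1nn i x)
      have h2 : 0 ≤ 2*dR*τ := by nlinarith
      linarith
    · intro e he x y
      rw [hGh2]
      have h1 := mul_nonneg hs0.le (hG2nn e he x y)
      linarith
    · intro e he
      calc ∑ x, ∑ y, Gh.2 e x y = ∑ x, (s * (∑ y, G2 e x y) + 2*dR*τ) :=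
            Finset.sum_congr rfl fun x _ => by
              simp only [hGh2]
              rw [Finset.sum_add_distrib, ← Finset.mul_sum, hconst2]
      _ = s * (∑ x, ∑ y, G2 e x y) + Λ := by
            rw [Finset.sum_add_distrib, ← Finset.mul_sum, hconst1]
      _ = 1 := by rw [htot e he, hsdef]; ring
  have hτ1 : ∀ i x, τ ≤ Gh.1 i x := by
    intro i x
    rw [hGh1]
    have h1 := mul_nonneg hs0.le (hG1nn i x)
    nlinarith
  have hτ2 : ∀ e ∈ E, ∀ x y, τ ≤ Gh.2 e x y := by
    intro e he x y
    rw [hGh2]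
    have h1 := mul_nonneg hs0.le (hG2nn e he x y)
    linarith
  -- l1 distance bounds
  have hΛd : 2*dR*τ = Λ/dR := by
    rw [hΛ, eq_div_iff hd0.ne']
    ring
  have hvert : ∀ i, ∑ x, |Gh.1 i x - Γη.1 i x| ≤ 2*s*β i + 2*Λ := by
    intro i
    have hstep : ∀ x, |Gh.1 i x - Γη.1 i x| ≤
        s*w i x + s*(β i*Γη.1 i x) + Λ*Γη.1 i x + Λ/dR := by
      intro x
      have hdecomp : Gh.1 i x - Γη.1 i x
          = s*w i x - s*(β i*Γη.1 i x) - Λ*Γη.1 i x + Λ/dR := by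
        rw [hGh1, show G1 i x = (1-β i)*Γη.1 i x + w i x from by rw [hG1], hΛd, hsdef]
        ring
      rw [hdecomp]
      have t1 : 0 ≤ s*w i x := mul_nonneg hs0.le (hw0 i x)
      have t2 : 0 ≤ s*(β i*Γη.1 i x) := mul_nonneg hs0.le (mul_nonneg (hβ0 i) (hmem.1 i x))
      have t3 : 0 ≤ Λ*Γη.1 i x := mul_nonneg hΛ0.le (hmem.1 i x)
      have t4 : 0 ≤ Λ/dR := div_nonneg hΛ0.le hd0.le
      rw [abs_le]
      constructor <;> linarith
    calc ∑ x, |Gh.1 i x - Γη.1 i x|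
        ≤ ∑ x, (s*w i x + s*(β i*Γη.1 i x) + Λ*Γη.1 i x + Λ/dR) :=
          Finset.sum_le_sum fun x _ => hstep x
    _ = s*(∑ x, w i x) + s*(β i * 1) + Λ*1 + d*(Λ/dR) := by
        simp only [Finset.sum_add_distrib, ← Finset.mul_sum]
        rw [hmem.2.1 i, Finset.sum_const, Finset.card_univ, Fintype.card_fin, nsmul_eq_mul]
    _ ≤ 2*s*β i + 2*Λ := by
        have hc : (d:ℝ)*(Λ/dR) = Λ := by
          rw [← hdR, mul_div_cancel₀ _ hd0.ne']
        rw [hc, show ∑ x, w i x = β i from (congrFun hβ i).symm]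
        linarith
  have hedge : ∀ e ∈ E, ∑ x, ∑ y, |Gh.2 e x y - Γη.2 e x y|
      ≤ 2*s*(β e.1 + β e.2) + 2*Λ := by
    intro e he
    have hG2d : ∀ x y, |G2 e x y - Γη.2 e x y| ≤
        (β e.1 + β e.2 - β e.1*β e.2)*Γη.2 e x y + ((1-β e.1)*Γη.1 e.1 x) * b e y +
        a e x * ((1-β e.2) * Γη.1 e.2 y) + a e x * b e y := by
      intro x y
      have hdecomp : G2 e x y - Γη.2 e x y
          = -((β e.1 + β e.2 - β e.1*β e.2)*Γη.2 e x y)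
            + ((1-β e.1)*Γη.1 e.1 x) * b e y + a e x * ((1-β e.2) * Γη.1 e.2 y)
            + a e x * b e y := by
        rw [show G2 e x y = (1-β e.1)*(1-β e.2)*Γη.2 e x y +
          ((1-β e.1)*Γη.1 e.1 x) * b e y + a e x * ((1-β e.2) * Γη.1 e.2 y) +
          a e x * b e y from by rw [hG2]]
        ring
      rw [hdecomp]
      have t1 : 0 ≤ (β e.1 + β e.2 - β e.1*β e.2)*Γη.2 e x y :=
        mul_nonneg (by nlinarith [hβ0 e.1, hβ0 e.2, hβ3 e.1, hβ3 e.2])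
          (hmem.2.2.1 e he x y)
      have t2 : 0 ≤ ((1-β e.1)*Γη.1 e.1 x) * b e y :=
        mul_nonneg (mul_nonneg (by linarith [hβ3 e.1]) (hmem.1 e.1 x)) (hb0 e he y)
      have t3 : 0 ≤ a e x * ((1-β e.2) * Γη.1 e.2 y) :=
        mul_nonneg (ha0 e he x) (mul_nonneg (by linarith [hβ3 e.2]) (hmem.1 e.2 y))
      have t4 : 0 ≤ a e x * b e y := mul_nonneg (ha0 e he x) (hb0 e he y)
      rw [abs_le]
      constructor <;> linarith
    have hinner : ∀ x, ∑ y, ((β e.1 + β e.2 - β e.1*β e.2)*Γη.2 e x y +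
        ((1-β e.1)*Γη.1 e.1 x) * b e y + a e x * ((1-β e.2) * Γη.1 e.2 y) + a e x * b e y)
        = (β e.1 + β e.2 - β e.1*β e.2)*Γη.1 e.1 x +
          ((1-β e.1)*Γη.1 e.1 x) * β e.2 + a e x * ((1-β e.2) * 1) + a e x * β e.2 := by
      intro x
      simp only [Finset.sum_add_distrib, ← Finset.mul_sum]
      rw [hηrow e he x, hbsum e he, hmem.2.1 e.2]
      try ring
    have houter : ∑ x, ((β e.1 + β e.2 - β e.1*β e.2)*Γη.1 e.1 x +
        ((1-β e.1)*Γη.1 e.1 x) * β e.2 + a e x * ((1-β e.2) * 1) + a e x * β e.2)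
        = (β e.1 + β e.2 - β e.1*β e.2)*1 + ((1-β e.1)*1) * β e.2 +
          β e.1 * ((1-β e.2) * 1) + β e.1 * β e.2 := by
      simp only [Finset.sum_add_distrib, ← Finset.mul_sum, ← Finset.sum_mul]
      rw [hmem.2.1 e.1, hasum e he]
      try ring
    have hG2sum : ∑ x, ∑ y, |G2 e x y - Γη.2 e x y| ≤ 2*(β e.1 + β e.2) := by
      calc ∑ x, ∑ y, |G2 e x y - Γη.2 e x y|
          ≤ ∑ x, ∑ y, ((β e.1 + β e.2 - β e.1*β e.2)*Γη.2 e x y +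
            ((1-β e.1)*Γη.1 e.1 x) * b e y + a e x * ((1-β e.2) * Γη.1 e.2 y) +
            a e x * b e y) :=
            Finset.sum_le_sum fun x _ => Finset.sum_le_sum fun y _ => hG2d x y
      _ = (β e.1 + β e.2 - β e.1*β e.2)*1 + ((1-β e.1)*1) * β e.2 +
          β e.1 * ((1-β e.2) * 1) + β e.1 * β e.2 := by
            rw [Finset.sum_congr rfl fun x _ => hinner x, houter]
      _ ≤ 2*(β e.1 + β e.2) := by nlinarith [hβ0 e.1, hβ0 e.2]
    have hstep : ∀ x y, |Gh.2 e x y - Γη.2 e x y| ≤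
        s*|G2 e x y - Γη.2 e x y| + Λ*Γη.2 e x y + 2*τ := by
      intro x y
      have hdecomp : Gh.2 e x y - Γη.2 e x y
          = s*(G2 e x y - Γη.2 e x y) - Λ*Γη.2 e x y + 2*τ := by
        rw [hGh2, hsdef]; ring
      rw [hdecomp]
      have t2 : 0 ≤ Λ*Γη.2 e x y := mul_nonneg hΛ0.le (hmem.2.2.1 e he x y)
      have t3 : 0 ≤ (2:ℝ)*τ := by linarith
      have t1 : |s*(G2 e x y - Γη.2 e x y)| = s*|G2 e x y - Γη.2 e x y| := by
        rw [abs_mul, abs_of_pos hs0]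
      have t4 := abs_nonneg (G2 e x y - Γη.2 e x y)
      have t5 := le_abs_self (s*(G2 e x y - Γη.2 e x y))
      have t6 := neg_abs_le (s*(G2 e x y - Γη.2 e x y))
      rw [abs_le]
      constructor <;> [linarith [t1 ▸ t6]; linarith [t1 ▸ t5]]
    calc ∑ x, ∑ y, |Gh.2 e x y - Γη.2 e x y|
        ≤ ∑ x, ∑ y, (s*|G2 e x y - Γη.2 e x y| + Λ*Γη.2 e x y + 2*τ) :=
          Finset.sum_le_sum fun x _ => Finset.sum_le_sum fun y _ => hstep x y
    _ = ∑ x, (s*(∑ y, |G2 e x y - Γη.2 e x y|) + Λ*(∑ y, Γη.2 e x y) + 2*dR*τ) :=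
        Finset.sum_congr rfl fun x _ => by
          rw [Finset.sum_add_distrib, Finset.sum_add_distrib, ← Finset.mul_sum,
            ← Finset.mul_sum, hconst2]
    _ = s*(∑ x, ∑ y, |G2 e x y - Γη.2 e x y|) + Λ*(∑ x, ∑ y, Γη.2 e x y) + Λ := by
        rw [Finset.sum_add_distrib, Finset.sum_add_distrib, ← Finset.mul_sum,
          ← Finset.mul_sum, hconst1]
    _ ≤ s*(2*(β e.1 + β e.2)) + Λ*1 + Λ := by
        have h1 := mul_le_mul_of_nonneg_left hG2sum hs0.le
        rw [hmem.2.2.2.2.2 e he]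
        linarith
    _ = 2*s*(β e.1 + β e.2) + 2*Λ := by ring
  -- total beta bounds
  have hβtot : ∑ i, β i ≤ slkL1 E ν / s := by
    have e1 : ∀ x : Fin d, ∑ i : V, ∑ e ∈ E,
        ((if e.1 = i then |ν.1 e x| else 0) + if e.2 = i then |ν.2 e x| else 0)
        = ∑ e ∈ E, (|ν.1 e x| + |ν.2 e x|) := by
      intro x
      rw [Finset.sum_comm]
      refine Finset.sum_congr rfl fun e _ => ?_
      rw [Finset.sum_add_distrib, Finset.sum_ite_eq, Finset.sum_ite_eq]
      simp
    calc ∑ i, β i ≤ ∑ i : V, ∑ x : Fin d, (∑ e ∈ E,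
        ((if e.1 = i then |ν.1 e x| else 0) + if e.2 = i then |ν.2 e x| else 0))/s := by
          refine Finset.sum_le_sum fun i _ => ?_
          rw [hβ]
          refine Finset.sum_le_sum fun x _ => ?_
          rw [hw]
          exact min_le_left _ _
    _ = (∑ i : V, ∑ x : Fin d, ∑ e ∈ E,
        ((if e.1 = i then |ν.1 e x| else 0) + if e.2 = i then |ν.2 e x| else 0))/s := by
          simp only [← Finset.sum_div]
    _ = (∑ x : Fin d, ∑ i : V, ∑ e ∈ E,
        ((if e.1 = i then |ν.1 e x| else 0) + if e.2 = i then |ν.2 e x| else 0))/s := by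
          rw [Finset.sum_comm]
    _ = (∑ x : Fin d, ∑ e ∈ E, (|ν.1 e x| + |ν.2 e x|))/s := by
          rw [Finset.sum_congr rfl fun x _ => e1 x]
    _ = slkL1 E ν / s := by
          rw [Finset.sum_comm, slkL1]
          congr 1
          refine Finset.sum_congr rfl fun e _ => ?_
          rw [Finset.sum_add_distrib]
  have hcount : ∑ e ∈ E, (β e.1 + β e.2) ≤ 2*(degG E : ℝ)*(∑ i, β i) := by
    have hD1 : ∀ i : V, ((E.filter fun e => e.1 = i).card : ℝ) ≤ (degG E : ℝ) := by
      intro i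
      have h1 : (E.filter fun e => e.1 = i).card ≤ degG E := by
        have hsub : (E.filter fun e => e.1 = i) ⊆ E.filter fun e => e.1 = i ∨ e.2 = i :=
          Finset.monotone_filter_right E (fun e _ h => Or.inl h)
        refine le_trans (Finset.card_le_card hsub) ?_
        unfold degG
        exact Finset.le_sup (f := fun i : V => (E.filter fun e => e.1 = i ∨ e.2 = i).card)
          (Finset.mem_univ i)
      exact_mod_cast h1
    have hD2 : ∀ i : V, ((E.filter fun e => e.2 = i).card : ℝ) ≤ (degG E : ℝ) := by
      intro i
      have h1 : (E.filter fun e => e.2 = i).card ≤ degG E := by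
        have hsub : (E.filter fun e => e.2 = i) ⊆ E.filter fun e => e.1 = i ∨ e.2 = i :=
          Finset.monotone_filter_right E (fun e _ h => Or.inr h)
        refine le_trans (Finset.card_le_card hsub) ?_
        unfold degG
        exact Finset.le_sup (f := fun i : V => (E.filter fun e => e.1 = i ∨ e.2 = i).card)
          (Finset.mem_univ i)
      exact_mod_cast h1
    have h2 : ∑ e ∈ E, β e.1 ≤ (degG E : ℝ) * ∑ i, β i := by
      have e2 : ∀ e : V × V, β e.1 = ∑ i : V, if e.1 = i then β i else 0 := by
        intro e; rw [Finset.sum_ite_eq]; simp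
      rw [Finset.sum_congr rfl fun e _ => e2 e, Finset.sum_comm]
      have e3 : ∀ i : V, ∑ e ∈ E, (if e.1 = i then β i else 0)
          = ((E.filter fun e => e.1 = i).card : ℝ) * β i := by
        intro i
        rw [← Finset.sum_filter, Finset.sum_const, nsmul_eq_mul]
      rw [Finset.sum_congr rfl fun i _ => e3 i, Finset.mul_sum]
      exact Finset.sum_le_sum fun i _ => mul_le_mul_of_nonneg_right (hD1 i) (hβ0 i)
    have h3 : ∑ e ∈ E, β e.2 ≤ (degG E : ℝ) * ∑ i, β i := by
      have e2 : ∀ e : V × V, β e.2 = ∑ i : V, if e.2 = i then β i else 0 := by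
        intro e; rw [Finset.sum_ite_eq]; simp
      rw [Finset.sum_congr rfl fun e _ => e2 e, Finset.sum_comm]
      have e3 : ∀ i : V, ∑ e ∈ E, (if e.2 = i then β i else 0)
          = ((E.filter fun e => e.2 = i).card : ℝ) * β i := by
        intro i
        rw [← Finset.sum_filter, Finset.sum_const, nsmul_eq_mul]
      rw [Finset.sum_congr rfl fun i _ => e3 i, Finset.mul_sum]
      exact Finset.sum_le_sum fun i _ => mul_le_mul_of_nonneg_right (hD2 i) (hβ0 i)
    rw [Finset.sum_add_distrib]
    linarith
  refine ⟨Gh, hGhmem, hτ1, hτ2, ?_⟩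
  have hub1 : ∑ i : V, ∑ x, |Gh.1 i x - Γη.1 i x|
      ≤ 2*s*(∑ i, β i) + 2*Λ*(Fintype.card V : ℝ) := by
    calc ∑ i : V, ∑ x, |Gh.1 i x - Γη.1 i x| ≤ ∑ i : V, (2*s*β i + 2*Λ) :=
          Finset.sum_le_sum fun i _ => hvert i
    _ = 2*s*(∑ i, β i) + 2*Λ*(Fintype.card V : ℝ) := by
        rw [Finset.sum_add_distrib, ← Finset.mul_sum, Finset.sum_const, Finset.card_univ,
          nsmul_eq_mul]
        ring
  have hub2 : ∑ e ∈ E, ∑ x, ∑ y, |Gh.2 e x y - Γη.2 e x y|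
      ≤ 2*s*(∑ e ∈ E, (β e.1 + β e.2)) + 2*Λ*(E.card : ℝ) := by
    calc ∑ e ∈ E, ∑ x, ∑ y, |Gh.2 e x y - Γη.2 e x y|
        ≤ ∑ e ∈ E, (2*s*(β e.1 + β e.2) + 2*Λ) := Finset.sum_le_sum fun e he => hedge e he
    _ = 2*s*(∑ e ∈ E, (β e.1 + β e.2)) + 2*Λ*(E.card : ℝ) := by
        rw [Finset.sum_add_distrib, ← Finset.mul_sum, Finset.sum_const, nsmul_eq_mul]
        ring
  have hsb : s * (∑ i, β i) ≤ slkL1 E ν := by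
    have h1 := mul_le_mul_of_nonneg_left hβtot hs0.le
    rwa [mul_comm s (slkL1 E ν / s), div_mul_cancel₀ _ hs0.ne'] at h1
  have hβnn : 0 ≤ ∑ i, β i := Finset.sum_nonneg fun i _ => hβ0 i
  have hD0 : (0:ℝ) ≤ (degG E : ℝ) := Nat.cast_nonneg _
  have hkey1 : s * (∑ e ∈ E, (β e.1 + β e.2)) ≤ 2*(degG E : ℝ) * slkL1 E ν := by
    have h1 := mul_le_mul_of_nonneg_left hcount hs0.le
    have h2 : s * (2*(degG E : ℝ)*(∑ i, β i)) = 2*(degG E : ℝ)*(s * ∑ i, β i) := by ring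
    rw [h2] at h1
    have h3 := mul_le_mul_of_nonneg_left hsb (by positivity : (0:ℝ) ≤ 2*(degG E : ℝ))
    linarith
  have hfin : 2*Λ*(Fintype.card V : ℝ) + 2*Λ*(E.card : ℝ)
      = 4*((E.card : ℝ) + (Fintype.card V : ℝ))*dR^2*τ := by
    rw [hΛ]; ring
  have hfinal : (∑ i : V, ∑ x : Fin d, |Gh.1 i x - Γη.1 i x|) +
      ∑ e ∈ E, ∑ x : Fin d, ∑ y : Fin d, |Gh.2 e x y - Γη.2 e x y|
      ≤ (4*(degG E : ℝ) + 2) * slkL1 E ν +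
        4*((E.card : ℝ) + (Fintype.card V : ℝ))*dR^2*τ := by
    have b1 : 2*s*(∑ i, β i) = 2*(s * ∑ i, β i) := by ring
    have b2 : 2*s*(∑ e ∈ E, (β e.1 + β e.2)) = 2*(s * ∑ e ∈ E, (β e.1 + β e.2)) := by ring
    nlinarith [hub1, hub2, hsb, hkey1, hfin]
  exact hfinal

end Construction

section MainAux

variable {V : Type} [Fintype V] {d : ℕ}

private lemma memSL2_combo (E : Finset (V × V))
    (A B : MV V d) (hA : memSL2 E (0:Slk V d) A) (hB : memSL2 E (0:Slk V d) B)
    (t : ℝ) (ht0 : 0 ≤ t) (ht1 : t ≤ 1) :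
    memSL2 E (0:Slk V d)
      ((fun i x => (1-t)*A.1 i x + t*B.1 i x,
        fun e x y => (1-t)*A.2 e x y + t*B.2 e x y) : MV V d) := by
  refine ⟨?_, ?_, ?_, ?_, ?_, ?_⟩
  · intro i x
    have h1 := hA.1 i x; have h2 := hB.1 i x
    show 0 ≤ (1-t)*A.1 i x + t*B.1 i x
    nlinarith
  · intro i
    show ∑ x, ((1-t)*A.1 i x + t*B.1 i x) = 1
    rw [Finset.sum_add_distrib, ← Finset.mul_sum, ← Finset.mul_sum, hA.2.1 i, hB.2.1 i]
    ring
  · intro e he x y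
    have h1 := hA.2.2.1 e he x y; have h2 := hB.2.2.1 e he x y
    show 0 ≤ (1-t)*A.2 e x y + t*B.2 e x y
    nlinarith
  · intro e he x
    show ∑ y, ((1-t)*A.2 e x y + t*B.2 e x y) = _
    have h1 := hA.2.2.2.1 e he x
    have h2 := hB.2.2.2.1 e he x
    have hz : (0:Slk V d).1 e x = 0 := rfl
    rw [hz] at h1 h2
    rw [Finset.sum_add_distrib, ← Finset.mul_sum, ← Finset.mul_sum, h1, h2]
    show _ = (1-t)*A.1 e.1 x + t*B.1 e.1 x + (0:Slk V d).1 e x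
    rw [hz]
    ring
  · intro e he y
    show ∑ x, ((1-t)*A.2 e x y + t*B.2 e x y) = _
    have h1 := hA.2.2.2.2.1 e he y
    have h2 := hB.2.2.2.2.1 e he y
    have hz : (0:Slk V d).2 e y = 0 := rfl
    rw [hz] at h1 h2
    rw [Finset.sum_add_distrib, ← Finset.mul_sum, ← Finset.mul_sum, h1, h2]
    show _ = (1-t)*A.1 e.2 y + t*B.1 e.2 y + (0:Slk V d).2 e y
    rw [hz]
    ring
  · intro e he
    calc ∑ x, ∑ y, ((1-t)*A.2 e x y + t*B.2 e x y)
        = ∑ x, ((1-t)*(∑ y, A.2 e x y) + t*(∑ y, B.2 e x y)) :=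
          Finset.sum_congr rfl fun x _ => by
            rw [Finset.sum_add_distrib, ← Finset.mul_sum, ← Finset.mul_sum]
    _ = (1-t)*(∑ x, ∑ y, A.2 e x y) + t*(∑ x, ∑ y, B.2 e x y) := by
          rw [Finset.sum_add_distrib, ← Finset.mul_sum, ← Finset.mul_sum]
    _ = 1 := by rw [hA.2.2.2.2.2 e he, hB.2.2.2.2.2 e he]; ring

private lemma inner_combo (E : Finset (V × V)) (Cv : V → Fin d → ℝ)
    (Ce : V × V → Fin d → Fin d → ℝ) (A B : MV V d) (t : ℝ) :
    mvInner E Cv Ce ((fun i x => (1-t)*A.1 i x + t*B.1 i x,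
        fun e x y => (1-t)*A.2 e x y + t*B.2 e x y) : MV V d)
      = (1-t)*mvInner E Cv Ce A + t*mvInner E Cv Ce B := by
  rw [mvInner, mvInner, mvInner]
  have h1 : ∑ i : V, ∑ x, Cv i x * ((1-t)*A.1 i x + t*B.1 i x)
      = (1-t)*(∑ i : V, ∑ x, Cv i x * A.1 i x) + t*(∑ i : V, ∑ x, Cv i x * B.1 i x) := by
    rw [Finset.mul_sum, Finset.mul_sum, ← Finset.sum_add_distrib]
    refine Finset.sum_congr rfl fun i _ => ?_
    rw [Finset.mul_sum, Finset.mul_sum, ← Finset.sum_add_distrib]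
    exact Finset.sum_congr rfl fun x _ => by ring
  have h2 : ∑ e ∈ E, ∑ x, ∑ y, Ce e x y * ((1-t)*A.2 e x y + t*B.2 e x y)
      = (1-t)*(∑ e ∈ E, ∑ x, ∑ y, Ce e x y * A.2 e x y)
        + t*(∑ e ∈ E, ∑ x, ∑ y, Ce e x y * B.2 e x y) := by
    rw [Finset.mul_sum, Finset.mul_sum, ← Finset.sum_add_distrib]
    refine Finset.sum_congr rfl fun e _ => ?_
    rw [Finset.mul_sum, Finset.mul_sum, ← Finset.sum_add_distrib]
    refine Finset.sum_congr rfl fun x _ => ?_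
    rw [Finset.mul_sum, Finset.mul_sum, ← Finset.sum_add_distrib]
    exact Finset.sum_congr rfl fun y _ => by ring
  show (∑ i : V, ∑ x, Cv i x * ((1-t)*A.1 i x + t*B.1 i x)) +
      (∑ e ∈ E, ∑ x, ∑ y, Ce e x y * ((1-t)*A.2 e x y + t*B.2 e x y)) = _
  rw [h1, h2]
  ring

private lemma mass_combo (E : Finset (V × V)) (A B : MV V d) (t : ℝ) :
    mass E ((fun i x => (1-t)*A.1 i x + t*B.1 i x,
        fun e x y => (1-t)*A.2 e x y + t*B.2 e x y) : MV V d)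
      = (1-t)*mass E A + t*mass E B := by
  rw [mass, mass, mass]
  have h1 : ∑ i : V, ∑ x, ((1-t)*A.1 i x + t*B.1 i x)
      = (1-t)*(∑ i : V, ∑ x, A.1 i x) + t*(∑ i : V, ∑ x, B.1 i x) := by
    rw [Finset.mul_sum, Finset.mul_sum, ← Finset.sum_add_distrib]
    refine Finset.sum_congr rfl fun i _ => ?_
    rw [Finset.mul_sum, Finset.mul_sum, ← Finset.sum_add_distrib]
  have h2 : ∑ e ∈ E, ∑ x, ∑ y, ((1-t)*A.2 e x y + t*B.2 e x y)
      = (1-t)*(∑ e ∈ E, ∑ x, ∑ y, A.2 e x y) + t*(∑ e ∈ E, ∑ x, ∑ y, B.2 e x y) := by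
    rw [Finset.mul_sum, Finset.mul_sum, ← Finset.sum_add_distrib]
    refine Finset.sum_congr rfl fun e _ => ?_
    rw [Finset.mul_sum, Finset.mul_sum, ← Finset.sum_add_distrib]
    refine Finset.sum_congr rfl fun x _ => ?_
    rw [Finset.mul_sum, Finset.mul_sum, ← Finset.sum_add_distrib]
  rw [h1, h2]
  ring

/-- strong-convexity consequence: squared distances bounded by objective gap -/
private lemma part1 (E : Finset (V × V)) (Cv : V → Fin d → ℝ)
    (Ce : V × V → Fin d → Fin d → ℝ) (η : ℝ) (hη : 0 < η)
    (Γη : MV V d)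
    (hΓη : memSL2 E (0 : Slk V d) Γη ∧ ∀ Γ'', memSL2 E (0 : Slk V d) Γ'' →
      mvInner E Cv Ce Γη - (1 / η) * mvH E Γη ≤
        mvInner E Cv Ce Γ'' - (1 / η) * mvH E Γ'')
    (Γ2 : MV V d) (hΓ2mem : memSL2 E (0 : Slk V d) Γ2) :
    (∑ i : V, (∑ x : Fin d, |Γ2.1 i x - Γη.1 i x|) ^ 2) +
      (∑ e ∈ E, (∑ x : Fin d, ∑ y : Fin d, |Γ2.2 e x y - Γη.2 e x y|) ^ 2) ≤
    2 * ((η * mvInner E Cv Ce Γ2 - mvH E Γ2) - (η * mvInner E Cv Ce Γη - mvH E Γη)) := by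
  set S := (∑ i : V, (∑ x : Fin d, |Γ2.1 i x - Γη.1 i x|) ^ 2) +
      (∑ e ∈ E, (∑ x : Fin d, ∑ y : Fin d, |Γ2.2 e x y - Γη.2 e x y|) ^ 2) with hS
  have hS0 : 0 ≤ S := by
    rw [hS]
    have h1 : (0:ℝ) ≤ ∑ i : V, (∑ x : Fin d, |Γ2.1 i x - Γη.1 i x|) ^ 2 :=
      Finset.sum_nonneg fun i _ => sq_nonneg _
    have h2 : (0:ℝ) ≤ ∑ e ∈ E, (∑ x : Fin d, ∑ y : Fin d, |Γ2.2 e x y - Γη.2 e x y|) ^ 2 :=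
      Finset.sum_nonneg fun e _ => sq_nonneg _
    linarith
  have hmul : ∀ X : MV V d, η * (mvInner E Cv Ce X - (1/η) * mvH E X)
      = η * mvInner E Cv Ce X - mvH E X := by
    intro X
    field_simp
  have hgmin : ∀ X, memSL2 E (0 : Slk V d) X →
      η * mvInner E Cv Ce Γη - mvH E Γη ≤ η * mvInner E Cv Ce X - mvH E X := by
    intro X hX
    have h := mul_le_mul_of_nonneg_left (hΓη.2 X hX) hη.le
    rw [hmul, hmul] at h
    exact h
  have hgap0 : 0 ≤ (η * mvInner E Cv Ce Γ2 - mvH E Γ2) -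
      (η * mvInner E Cv Ce Γη - mvH E Γη) := by
    have := hgmin Γ2 hΓ2mem
    linarith
  -- key inequality for each t ∈ (0,1)
  have key : ∀ t : ℝ, 0 < t → t < 1 → (1/2)*(t*(1-t))*S ≤
      t * ((η * mvInner E Cv Ce Γ2 - mvH E Γ2) - (η * mvInner E Cv Ce Γη - mvH E Γη)) := by
    intro t ht0 ht1
    set r : MV V d := (fun i x => (1-t)*Γη.1 i x + t*Γ2.1 i x,
        fun e x y => (1-t)*Γη.2 e x y + t*Γ2.2 e x y) with hr
    have hrmem : memSL2 E (0:Slk V d) r :=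
      memSL2_combo E Γη Γ2 hΓη.1 hΓ2mem t ht0.le ht1.le
    have hgr := hgmin r hrmem
    -- entropy strong convexity per blocks
    have hv : ∀ i : V, (1/2)*(t*(1-t))*(∑ x, |Γ2.1 i x - Γη.1 i x|)^2 ≤
        (1-t)*(∑ x, Γη.1 i x * Real.log (Γη.1 i x)) +
          t*(∑ x, Γ2.1 i x * Real.log (Γ2.1 i x)) -
          ∑ x, r.1 i x * Real.log (r.1 i x) := by
      intro i
      have hb := Stmt16.block_sc (Γη.1 i) (Γ2.1 i) t
        (fun x => hΓη.1.1 i x) (fun x => hΓ2mem.1 i x)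
        (hΓη.1.2.1 i) (hΓ2mem.2.1 i) ht0 ht1
      have habs : ∑ x, |Γη.1 i x - Γ2.1 i x| = ∑ x, |Γ2.1 i x - Γη.1 i x| :=
        Finset.sum_congr rfl fun x _ => abs_sub_comm _ _
      rw [habs] at hb
      exact hb
    have he : ∀ e ∈ E, (1/2)*(t*(1-t))*(∑ x, ∑ y, |Γ2.2 e x y - Γη.2 e x y|)^2 ≤
        (1-t)*(∑ x, ∑ y, Γη.2 e x y * Real.log (Γη.2 e x y)) +
          t*(∑ x, ∑ y, Γ2.2 e x y * Real.log (Γ2.2 e x y)) -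
          ∑ x, ∑ y, r.2 e x y * Real.log (r.2 e x y) := by
      intro e he
      have hb := Stmt16.block_sc (fun q : Fin d × Fin d => Γη.2 e q.1 q.2)
        (fun q : Fin d × Fin d => Γ2.2 e q.1 q.2) t
        (fun q => hΓη.1.2.2.1 e he q.1 q.2) (fun q => hΓ2mem.2.2.1 e he q.1 q.2)
        (by rw [Fintype.sum_prod_type]; exact hΓη.1.2.2.2.2.2 e he)
        (by rw [Fintype.sum_prod_type]; exact hΓ2mem.2.2.2.2.2 e he) ht0 ht1
      simp only [Fintype.sum_prod_type] at hb
      have habs : ∑ x, ∑ y, |Γη.2 e x y - Γ2.2 e x y|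
          = ∑ x, ∑ y, |Γ2.2 e x y - Γη.2 e x y| :=
        Finset.sum_congr rfl fun x _ => Finset.sum_congr rfl fun y _ => abs_sub_comm _ _
      rw [habs] at hb
      exact hb
    have hsumv := Finset.sum_le_sum (fun i (_ : i ∈ Finset.univ) => hv i)
    have hsume := Finset.sum_le_sum he
    rw [← Finset.mul_sum] at hsumv hsume
    rw [Finset.sum_sub_distrib, Finset.sum_add_distrib, ← Finset.mul_sum, ← Finset.mul_sum]
      at hsumv hsume
    have hPhi : (1/2)*(t*(1-t))*S ≤ (1-t)*Phi E Γη + t*Phi E Γ2 - Phi E r := by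
      rw [hS, Phi, Phi, Phi, mul_add]
      linarith
    have hlin : (1-t)*(η * mvInner E Cv Ce Γη - mvH E Γη) +
        t*(η * mvInner E Cv Ce Γ2 - mvH E Γ2) -
        (η * mvInner E Cv Ce r - mvH E r)
        = (1-t)*Phi E Γη + t*Phi E Γ2 - Phi E r := by
      rw [mvH_eq, mvH_eq, mvH_eq, hr, inner_combo, mass_combo]
      ring
    have hfinal : (1/2)*(t*(1-t))*S ≤ (1-t)*(η * mvInner E Cv Ce Γη - mvH E Γη) +
        t*(η * mvInner E Cv Ce Γ2 - mvH E Γ2) - (η * mvInner E Cv Ce r - mvH E r) := by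
      rw [hlin]; exact hPhi
    nlinarith [hgr]
  -- conclude by letting t → 0
  by_contra hcon
  push_neg at hcon
  set D := (η * mvInner E Cv Ce Γ2 - mvH E Γ2) - (η * mvInner E Cv Ce Γη - mvH E Γη) with hD
  have hSD : 2*D < S := by linarith
  have hSpos : 0 < S := by linarith
  set t : ℝ := (S - 2*D)/(2*S) with ht
  have ht0 : 0 < t := by
    rw [ht]
    exact div_pos (by linarith) (by linarith)
  have ht1 : t < 1 := by
    rw [ht, div_lt_one (by linarith : (0:ℝ) < 2*S)]
    linarith
  have hk := key t ht0 ht1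
  have hexp : (1/2)*(t*(1-t))*S - t*D = t*((1-t)*S/2 - D) := by ring
  have ht2 : (1-t)*S/2 - D > 0 := by
    have h1 : t*S = (S - 2*D)/2 := by
      rw [ht]
      field_simp
    nlinarith
  nlinarith [mul_pos ht0 ht2]

end MainAux

set_option maxHeartbeats 1000000 in
/-- The entropy-regularized optimum over the slack polytope,
suitably projected back to `𝕃₂`, is close to the entropy-regularized optimum
over `𝕃₂` in the component-wise squared `l₁` sense. -/
theorem stmt_16 {V : Type} [Fintype V] [DecidableEq V] {d : ℕ} (hd : 1 ≤ d)
    (E : Finset (V × V))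
    (hcover : ∀ i : V, ∃ e ∈ E, e.1 = i ∨ e.2 = i)
    (Cv : V → Fin d → ℝ) (Ce : V × V → Fin d → Fin d → ℝ)
    (Cinf : ℝ)
    (hCinf : IsGreatest {r : ℝ | (∃ i x, r = |Cv i x|) ∨
        ∃ e ∈ E, ∃ x y, r = |Ce e x y|} Cinf)
    (η : ℝ) (hη : 0 < η)
    (τ : ℝ) (hτ0 : 0 < τ) (hτ : τ ≤ 1 / (8 * d ^ 2))
    (ν : Slk V d) (hν : isSlack E ν)
    (hinf : ∀ e ∈ E, ∀ x : Fin d,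
      |ν.1 e x| ≤ 1 / (4 * d) ∧ |ν.2 e x| ≤ 1 / (4 * d))
    (Γ : MV V d)
    (hΓ : memSL2 E ν Γ ∧ ∀ Γ'', memSL2 E ν Γ'' →
      mvInner E Cv Ce Γ - (1 / η) * mvH E Γ ≤
        mvInner E Cv Ce Γ'' - (1 / η) * mvH E Γ'')
    (Γη : MV V d)
    (hΓη : memSL2 E (0 : Slk V d) Γη ∧ ∀ Γ'', memSL2 E (0 : Slk V d) Γ'' →
      mvInner E Cv Ce Γη - (1 / η) * mvH E Γη ≤
        mvInner E Cv Ce Γ'' - (1 / η) * mvH E Γ'')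
    (Γ2 : MV V d)
    (hΓ2mem : memSL2 E (0 : Slk V d) Γ2)
    (hΓ2τv : ∀ i x, τ ≤ Γ2.1 i x)
    (hΓ2τe : ∀ e ∈ E, ∀ x y, τ ≤ Γ2.2 e x y)
    (hΓ2close : mvL1 E (Γ - Γ2) ≤
      2 * slkL1 E ν + 2 * ((E.card : ℝ) + Fintype.card V) * d ^ 2 * τ) :
    (∑ i : V, (1 / 2) * (∑ x : Fin d, |Γ2.1 i x - Γη.1 i x|) ^ 2) +
      (∑ e ∈ E, (1 / 2) * (∑ x : Fin d, ∑ y : Fin d, |Γ2.2 e x y - Γη.2 e x y|) ^ 2) ≤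
    (η * Cinf + Real.log (1 / τ)) *
      (8 * d * degG E * slkL1 E ν +
        10 * ((E.card : ℝ) + Fintype.card V) * d ^ 2 * τ) := by
  
  have hd1 : (1:ℝ) ≤ (d:ℝ) := by exact_mod_cast hd
  have hd0 : (0:ℝ) < (d:ℝ) := by linarith
  have hCinf0 : 0 ≤ Cinf := by
    rcases hCinf.1 with ⟨i, x, hx⟩ | ⟨e, _, x, y, hx⟩ <;> rw [hx] <;> exact abs_nonneg _
  have hCv : ∀ i x, |Cv i x| ≤ Cinf := fun i x => hCinf.2 (Or.inl ⟨i, x, rfl⟩)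
  have hCe : ∀ e ∈ E, ∀ x y, |Ce e x y| ≤ Cinf :=
    fun e he x y => hCinf.2 (Or.inr ⟨e, he, x, y, rfl⟩)
  have hVne : Nonempty V := by
    rcases hCinf.1 with ⟨i, _, _⟩ | ⟨e, _, _⟩
    exacts [⟨i⟩, ⟨e.1⟩]
  have hDeg1 : 1 ≤ degG E := by
    obtain ⟨i⟩ := hVne
    obtain ⟨e, he, hor⟩ := hcover i
    have h1 : 0 < (E.filter fun e => e.1 = i ∨ e.2 = i).card :=
      Finset.card_pos.2 ⟨e, Finset.mem_filter.2 ⟨he, hor⟩⟩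
    calc 1 ≤ (E.filter fun e => e.1 = i ∨ e.2 = i).card := h1
    _ ≤ degG E := by
        unfold degG
        exact Finset.le_sup (f := fun i : V => (E.filter fun e => e.1 = i ∨ e.2 = i).card)
          (Finset.mem_univ i)
  have hDeg1R : (1:ℝ) ≤ (degG E : ℝ) := by exact_mod_cast hDeg1
  have hτ8 : τ ≤ 1/8 := by
    have h1 : (8:ℝ) ≤ 8*(d:ℝ)^2 := by nlinarith
    have h2 : 1/(8*(d:ℝ)^2) ≤ 1/8 :=
      one_div_le_one_div_of_le (by norm_num) h1
    calc τ ≤ 1/(8*(d:ℝ)^2) := hτ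
    _ ≤ 1/8 := h2
  have hL : 1 ≤ Real.log (1/τ) := by
    have h8 : (8:ℝ) ≤ 1/τ := by
      rw [le_div_iff₀ hτ0]
      linarith
    have hexp : Real.exp 1 ≤ 1/τ :=
      le_trans (le_trans Real.exp_one_lt_d9.le (by norm_num)) h8
    calc (1:ℝ) = Real.log (Real.exp 1) := (Real.log_exp 1).symm
    _ ≤ Real.log (1/τ) := Real.log_le_log (Real.exp_pos 1) hexp
  have hK0 : 0 ≤ η * Cinf + Real.log (1/τ) := by nlinarith [hη.le]
  have hmassΓ := mass_eq E hΓ.1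
  have hmassΓη := mass_eq E hΓη.1
  have hmassΓ2 := mass_eq E hΓ2mem
  obtain ⟨Gh, hGhmem, hGhτ1, hGhτ2, hGhdist⟩ :=
    construction hd E τ hτ0 hτ ν hν hinf Γη hΓη.1
  have hmassGh := mass_eq E hGhmem
  have hA := g_diff_le E Cv Ce Cinf η τ hη.le hCv hCe hτ0 hL Γ Γ2
      hΓ.1.1 (vert_le_one E hΓ.1) hΓ.1.2.2.1 (edge_le_one E hΓ.1)
      hΓ2τv (vert_le_one E hΓ2mem) hΓ2τe (edge_le_one E hΓ2mem)
      (by rw [hmassΓ, hmassΓ2])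
  have hB := g_diff_le E Cv Ce Cinf η τ hη.le hCv hCe hτ0 hL Γη Gh
      hΓη.1.1 (vert_le_one E hΓη.1) hΓη.1.2.2.1 (edge_le_one E hΓη.1)
      hGhτ1 (vert_le_one E hGhmem) hGhτ2 (edge_le_one E hGhmem)
      (by rw [hmassΓη, hmassGh])
  have hmul : ∀ X : MV V d, η * (mvInner E Cv Ce X - (1/η) * mvH E X)
      = η * mvInner E Cv Ce X - mvH E X := by
    intro X
    field_simp
  have hmid : η * mvInner E Cv Ce Γ - mvH E Γ ≤ η * mvInner E Cv Ce Gh - mvH E Gh := by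
    have h := mul_le_mul_of_nonneg_left (hΓ.2 Gh hGhmem) hη.le
    rw [hmul, hmul] at h
    exact h
  have hP1 := part1 E Cv Ce η hη Γη hΓη Γ2 hΓ2mem
  -- translate the closeness hypothesis
  have heq : mvL1 E (Γ - Γ2) = (∑ i : V, ∑ x : Fin d, |Γ2.1 i x - Γ.1 i x|) +
      ∑ e ∈ E, ∑ x : Fin d, ∑ y : Fin d, |Γ2.2 e x y - Γ.2 e x y| := by
    rw [mvL1]
    congr 1
    · refine Finset.sum_congr rfl fun i _ => Finset.sum_congr rfl fun x _ => ?_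
      rw [show (Γ - Γ2).1 i x = Γ.1 i x - Γ2.1 i x from rfl]
      exact abs_sub_comm _ _
    · refine Finset.sum_congr rfl fun e _ => Finset.sum_congr rfl fun x _ =>
        Finset.sum_congr rfl fun y _ => ?_
      rw [show (Γ - Γ2).2 e x y = Γ.2 e x y - Γ2.2 e x y from rfl]
      exact abs_sub_comm _ _
  rw [heq] at hΓ2close
  -- assemble
  have hhalf : (∑ i : V, (1 / 2) * (∑ x : Fin d, |Γ2.1 i x - Γη.1 i x|) ^ 2) +
      (∑ e ∈ E, (1 / 2) * (∑ x : Fin d, ∑ y : Fin d, |Γ2.2 e x y - Γη.2 e x y|) ^ 2)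
      = (1/2) * ((∑ i : V, (∑ x : Fin d, |Γ2.1 i x - Γη.1 i x|) ^ 2) +
        (∑ e ∈ E, (∑ x : Fin d, ∑ y : Fin d, |Γ2.2 e x y - Γη.2 e x y|) ^ 2)) := by
    rw [mul_add, Finset.mul_sum, Finset.mul_sum]
  rw [hhalf]
  have hνnn : 0 ≤ slkL1 E ν := by
    rw [slkL1]
    refine Finset.sum_nonneg fun e _ => add_nonneg ?_ ?_ <;>
      exact Finset.sum_nonneg fun x _ => abs_nonneg _
  have hMnn : (0:ℝ) ≤ ((E.card : ℝ) + Fintype.card V) := by positivity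
  have hArhs := mul_le_mul_of_nonneg_left hΓ2close hK0
  have hBrhs := mul_le_mul_of_nonneg_left hGhdist hK0
  have hcoef : (4*(degG E : ℝ) + 2) + 2 ≤ 8*(d:ℝ)*(degG E : ℝ) := by
    nlinarith [hd1, hDeg1R]
  have hslack := mul_le_mul_of_nonneg_right hcoef hνnn
  have hMd : (0:ℝ) ≤ ((E.card : ℝ) + Fintype.card V) * (d:ℝ)^2 * τ := by positivity
  have hKM := mul_le_mul_of_nonneg_left (by linarith :
      2 * ((E.card : ℝ) + Fintype.card V) * (d:ℝ) ^ 2 * τ +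
        4*((E.card : ℝ) + (Fintype.card V : ℝ))*(d:ℝ)^2*τ +
        ((4*(degG E : ℝ) + 2) + 2) * slkL1 E ν ≤
      8*(d:ℝ)*(degG E : ℝ) * slkL1 E ν +
        10 * ((E.card : ℝ) + Fintype.card V) * (d:ℝ) ^ 2 * τ) hK0
  nlinarith [hP1, hA, hB, hmid, hArhs, hBrhs, hKM]
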